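/- arXiv:2503.04465 — 3 statements merged into one kernel-verified Lean document; each statement's English description precedes it below -/
import Mathlib

section
/- Let T₀, β, γ₁, γ₂, f₀, g₀ > 0 with γ₁ < γ₂. Let F : [0,T₀] → [0,∞) be antitone, let H : (0,T₀) → [0,∞) be Lebesgue integrable, and let f, g : (0,∞) → (0,∞) be functions such that f(s) ≥ f₀ · exp(−2/(γ₂ s)^β) for all s > 0, f(s) → 0 as s → 0⁺, and g(s) ≤ g₀ · exp(−2/(γ₁ s)^β) for all s > 0. Assume that for all t₁, t₂ with 0 < t₁ < t₂ ≤ T₀ one has f(t₂ − t₁) · F(t₂)² − g(t₂ − t₁) · F(t₁)² ≤ ∫_{t₁}^{t₂} H(τ) dτ. Then for every γ ∈ (0, γ₂ − γ₁) there exists T′ ∈ (0, T₀] such that for all T₁ ∈ (0, T′]: F(T₁) ≤ f₀^{−1/2} · exp(1/(γ T₁)^β) · (∫_0^{T₁} H(τ) dτ)^{1/2}. -/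
open MeasureTheory Set

theorem telescoping_observability_lemma
    (T₀ β γ₁ γ₂ f₀ g₀ : ℝ)
    (hT₀ : 0 < T₀) (hβ : 0 < β) (hγ₁ : 0 < γ₁) (hγ₂ : 0 < γ₂)
    (hf₀ : 0 < f₀) (hg₀ : 0 < g₀) (hγ : γ₁ < γ₂)
    (F : ℝ → ℝ) (hF : AntitoneOn F (Set.Icc 0 T₀)) (hFpos : ∀ t ∈ Set.Icc 0 T₀, 0 ≤ F t)
    (H : ℝ → ℝ) (hH : IntegrableOn H (Set.Ioo 0 T₀)) (hHpos : ∀ τ ∈ Set.Ioo 0 T₀, 0 ≤ H τ)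
    (f g : ℝ → ℝ)
    (hfpos : ∀ s : ℝ, 0 < s → 0 < f s) (hgpos : ∀ s : ℝ, 0 < s → 0 < g s)
    (hflb : ∀ s : ℝ, 0 < s → f₀ * Real.exp (-(2 / (γ₂ * s) ^ β)) ≤ f s)
    (hflim : Filter.Tendsto f (nhdsWithin 0 (Set.Ioi 0)) (nhds 0))
    (hgub : ∀ s : ℝ, 0 < s → g s ≤ g₀ * Real.exp (-(2 / (γ₁ * s) ^ β)))
    (hmain : ∀ t₁ t₂ : ℝ, 0 < t₁ → t₁ < t₂ → t₂ ≤ T₀ →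
      f (t₂ - t₁) * F t₂ ^ 2 - g (t₂ - t₁) * F t₁ ^ 2 ≤ ∫ τ in t₁..t₂, H τ) :
    ∀ γ : ℝ, 0 < γ → γ < γ₂ - γ₁ →
      ∃ T' : ℝ, 0 < T' ∧ T' ≤ T₀ ∧ ∀ T₁ : ℝ, 0 < T₁ → T₁ ≤ T' →
        F T₁ ≤ Real.sqrt f₀⁻¹ * Real.exp (1 / (γ * T₁) ^ β) *
          Real.sqrt (∫ τ in (0:ℝ)..T₁, H τ) := by
  intro γ hγ0 hγlt
  have hγltγ₂ : γ < γ₂ := by linarith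
  set ρ : ℝ := 1 - γ / γ₂ with hρdef
  have hρ1 : ρ < 1 := by
    have : 0 < γ / γ₂ := div_pos hγ0 hγ₂
    rw [hρdef]; linarith
  have hρ0 : 0 < ρ := by
    have : γ / γ₂ < 1 := (div_lt_one hγ₂).mpr hγltγ₂
    rw [hρdef]; linarith
  have hγ₂ρ : γ₂ * ρ = γ₂ - γ := by
    rw [hρdef]; field_simp
  have hρgt : γ₁ < γ₂ * ρ := by rw [hγ₂ρ]; linarith
  have hγ₂ρ0 : 0 < γ₂ * ρ := mul_pos hγ₂ hρ0
  have h1ρ : 0 < 1 - ρ := by linarith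
  -- the positive constant c
  set c : ℝ := 1 / γ₁ ^ β - 1 / (γ₂ * ρ) ^ β with hcdef
  have hq₁ : (0:ℝ) < γ₁ ^ β := Real.rpow_pos_of_pos hγ₁ β
  have hq₂ : (0:ℝ) < (γ₂ * ρ) ^ β := Real.rpow_pos_of_pos hγ₂ρ0 β
  have hqlt : γ₁ ^ β < (γ₂ * ρ) ^ β := Real.rpow_lt_rpow hγ₁.le hρgt hβ
  have hc : 0 < c := by
    rw [hcdef]
    have := one_div_lt_one_div_of_lt hq₁ hqlt
    linarith
  set L : ℝ := max 1 (Real.log (g₀ / f₀)) with hLdef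
  have hL : 0 < L := lt_of_lt_of_le one_pos (le_max_left _ _)
  have h2cL : 0 < 2 * c / L := by positivity
  set s₀ : ℝ := (2 * c / L) ^ (β⁻¹) with hs₀def
  have hs₀ : 0 < s₀ := Real.rpow_pos_of_pos h2cL _
  have hs₀β : s₀ ^ β = 2 * c / L := by
    rw [hs₀def, ← Real.rpow_mul h2cL.le, inv_mul_cancel₀ hβ.ne', Real.rpow_one]
  -- the key comparison: g s ≤ f (ρ * s) for small s
  have key : ∀ s : ℝ, 0 < s → s ≤ s₀ → g s ≤ f (ρ * s) := by
    intro s hs hss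
    have hρs : 0 < ρ * s := mul_pos hρ0 hs
    have hsβ : 0 < s ^ β := Real.rpow_pos_of_pos hs β
    have hA : (γ₁ * s) ^ β = γ₁ ^ β * s ^ β := Real.mul_rpow hγ₁.le hs.le
    have hB : (γ₂ * (ρ * s)) ^ β = (γ₂ * ρ) ^ β * s ^ β := by
      rw [← mul_assoc]; exact Real.mul_rpow hγ₂ρ0.le hs.le
    have hsβle : s ^ β ≤ 2 * c / L := by
      calc s ^ β ≤ s₀ ^ β := Real.rpow_le_rpow hs.le hss hβ.le
        _ = 2 * c / L := hs₀β
    have hD : Real.log (g₀ / f₀) ≤ 2 / (γ₁ * s) ^ β - 2 / (γ₂ * (ρ * s)) ^ β := by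
      have h1 : 2 / (γ₁ * s) ^ β - 2 / (γ₂ * (ρ * s)) ^ β = 2 * c / s ^ β := by
        rw [hA, hB, hcdef]
        field_simp
      rw [h1]
      have h2 : L ≤ 2 * c / s ^ β := by
        rw [le_div_iff₀ hsβ]
        calc L * s ^ β ≤ L * (2 * c / L) := mul_le_mul_of_nonneg_left hsβle hL.le
          _ = 2 * c := by field_simp
      exact le_trans (le_max_right _ _) h2
    have hgf : g₀ / f₀ ≤ Real.exp (2 / (γ₁ * s) ^ β - 2 / (γ₂ * (ρ * s)) ^ β) := by
      calc g₀ / f₀ = Real.exp (Real.log (g₀ / f₀)) := (Real.exp_log (by positivity)).symm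
        _ ≤ _ := Real.exp_le_exp.mpr hD
    have e0 : f₀ * (g₀ / f₀) = g₀ := by field_simp
    have key0 : g₀ ≤ f₀ * Real.exp (2 / (γ₁ * s) ^ β - 2 / (γ₂ * (ρ * s)) ^ β) :=
      e0 ▸ mul_le_mul_of_nonneg_left hgf hf₀.le
    have hmul := mul_le_mul_of_nonneg_right key0 (Real.exp_pos (-(2 / (γ₁ * s) ^ β))).le
    rw [mul_assoc, ← Real.exp_add] at hmul
    have e1 : 2 / (γ₁ * s) ^ β - 2 / (γ₂ * (ρ * s)) ^ β + -(2 / (γ₁ * s) ^ β)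
        = -(2 / (γ₂ * (ρ * s)) ^ β) := by ring
    rw [e1] at hmul
    exact le_trans (le_trans (hgub s hs) hmul) (hflb (ρ * s) hρs)
  -- choose T'
  refine ⟨min T₀ (s₀ / (1 - ρ)), lt_min hT₀ (div_pos hs₀ h1ρ), min_le_left _ _, ?_⟩
  intro T₁ hT₁ hT₁'
  have hT₁T₀ : T₁ ≤ T₀ := le_trans hT₁' (min_le_left _ _)
  have hsle : (1 - ρ) * T₁ ≤ s₀ := by
    have h := le_trans hT₁' (min_le_right _ _)
    have := mul_le_mul_of_nonneg_left h h1ρ.le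
    calc (1 - ρ) * T₁ ≤ (1 - ρ) * (s₀ / (1 - ρ)) := this
      _ = s₀ := by field_simp
  -- integrability helpers
  have hH' : IntegrableOn H (Set.Ioc 0 T₀) := by
    rw [IntegrableOn, ← Measure.restrict_congr_set MeasureTheory.Ioo_ae_eq_Ioc]
    exact hH
  have hInt : ∀ a b : ℝ, 0 ≤ a → a ≤ b → b ≤ T₀ → IntervalIntegrable H volume a b := by
    intro a b ha hab hb
    rw [intervalIntegrable_iff_integrableOn_Ioc_of_le hab]
    exact hH'.mono_set (Set.Ioc_subset_Ioc ha hb)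
  have hT₀ae : ∀ᵐ x : ℝ, x ≠ T₀ := by
    have h0 : (volume : Measure ℝ) {T₀} = 0 := measure_singleton T₀
    rw [ae_iff]
    simpa using h0
  have hIntNN : ∀ a b : ℝ, 0 ≤ a → a ≤ b → b ≤ T₀ → 0 ≤ ∫ τ in a..b, H τ := by
    intro a b h0 hab hb
    rw [intervalIntegral.integral_of_le hab]
    apply setIntegral_nonneg_ae measurableSet_Ioc
    filter_upwards [hT₀ae] with x hx hmem
    exact hHpos x ⟨lt_of_le_of_lt h0 hmem.1, lt_of_le_of_ne (hmem.2.trans hb) hx⟩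
  have hd : ∀ N : ℕ, ρ ^ N * T₁ - ρ ^ (N + 1) * T₁ = ρ ^ N * ((1 - ρ) * T₁) :=
    fun N => by ring
  have hρN1 : ∀ N : ℕ, ρ ^ N ≤ 1 := fun N => pow_le_one₀ hρ0.le hρ1.le
  have htNpos : ∀ N : ℕ, 0 < ρ ^ N * T₁ := fun N => mul_pos (pow_pos hρ0 N) hT₁
  have htNle : ∀ N : ℕ, ρ ^ N * T₁ ≤ T₁ := by
    intro N
    have := mul_le_mul_of_nonneg_right (hρN1 N) hT₁.le
    linarith
  have hsNpos : ∀ N : ℕ, 0 < ρ ^ N * ((1 - ρ) * T₁) :=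
    fun N => mul_pos (pow_pos hρ0 N) (mul_pos h1ρ hT₁)
  have hsNle : ∀ N : ℕ, ρ ^ N * ((1 - ρ) * T₁) ≤ s₀ := by
    intro N
    have h1 := mul_le_mul_of_nonneg_right (hρN1 N) (mul_pos h1ρ hT₁).le
    rw [one_mul] at h1
    exact h1.trans hsle
  -- telescoping induction
  have main : ∀ N : ℕ, f ((1 - ρ) * T₁) * F T₁ ^ 2 ≤
      f (ρ ^ N * ((1 - ρ) * T₁)) * F (ρ ^ N * T₁) ^ 2 + ∫ τ in (ρ ^ N * T₁)..T₁, H τ := by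
    intro N
    induction N with
    | zero => simp
    | succ N ih =>
      have hlt : ρ ^ (N + 1) * T₁ < ρ ^ N * T₁ := by
        have h1 : ρ ^ (N + 1) < ρ ^ N := by
          have := pow_pos hρ0 N
          calc ρ ^ (N + 1) = ρ ^ N * ρ := by ring
            _ < ρ ^ N * 1 := by nlinarith
            _ = ρ ^ N := by ring
        exact mul_lt_mul_of_pos_right h1 hT₁
      have hm := hmain (ρ ^ (N + 1) * T₁) (ρ ^ N * T₁) (htNpos (N + 1)) hlt
        ((htNle N).trans hT₁T₀)
      rw [hd N] at hm
      have hgf := key _ (hsNpos N) (hsNle N)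
      have e2 : ρ * (ρ ^ N * ((1 - ρ) * T₁)) = ρ ^ (N + 1) * ((1 - ρ) * T₁) := by ring
      rw [e2] at hgf
      have hprod := mul_le_mul_of_nonneg_right hgf (sq_nonneg (F (ρ ^ (N + 1) * T₁)))
      have hadd := intervalIntegral.integral_add_adjacent_intervals
        (hInt _ _ (htNpos (N + 1)).le hlt.le ((htNle N).trans hT₁T₀))
        (hInt _ _ (htNpos N).le (htNle N) hT₁T₀)
      linarith
  -- uniform bound with full integral
  have hIfull : 0 ≤ ∫ τ in (0:ℝ)..T₁, H τ := hIntNN 0 T₁ le_rfl hT₁.le hT₁T₀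
  have hbound : ∀ N : ℕ, f ((1 - ρ) * T₁) * F T₁ ^ 2 ≤
      f (ρ ^ N * ((1 - ρ) * T₁)) * F (ρ ^ N * T₁) ^ 2 + ∫ τ in (0:ℝ)..T₁, H τ := by
    intro N
    have hadd := intervalIntegral.integral_add_adjacent_intervals
      (hInt 0 (ρ ^ N * T₁) le_rfl (htNpos N).le ((htNle N).trans hT₁T₀))
      (hInt _ _ (htNpos N).le (htNle N) hT₁T₀)
    have h0N := hIntNN 0 (ρ ^ N * T₁) le_rfl (htNpos N).le ((htNle N).trans hT₁T₀)
    linarith [main N]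
  -- the limit
  have htend : Filter.Tendsto
      (fun N : ℕ => f (ρ ^ N * ((1 - ρ) * T₁)) * F (ρ ^ N * T₁) ^ 2)
      Filter.atTop (nhds 0) := by
    have hF0 : ∀ N : ℕ, F (ρ ^ N * T₁) ^ 2 ≤ F 0 ^ 2 := by
      intro N
      have hmem : ρ ^ N * T₁ ∈ Set.Icc 0 T₀ := ⟨(htNpos N).le, (htNle N).trans hT₁T₀⟩
      have := hF (Set.left_mem_Icc.mpr hT₀.le) hmem (htNpos N).le
      exact pow_le_pow_left₀ (hFpos _ hmem) this 2
    have hs : Filter.Tendsto (fun N : ℕ => ρ ^ N * ((1 - ρ) * T₁)) Filter.atTop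
        (nhdsWithin 0 (Set.Ioi 0)) := by
      apply tendsto_nhdsWithin_of_tendsto_nhds_of_eventually_within
      · have := tendsto_pow_atTop_nhds_zero_of_lt_one hρ0.le hρ1
        simpa using this.mul_const ((1 - ρ) * T₁)
      · exact Filter.Eventually.of_forall fun N => hsNpos N
    have hf0 : Filter.Tendsto (fun N : ℕ => f (ρ ^ N * ((1 - ρ) * T₁))) Filter.atTop
        (nhds 0) := hflim.comp hs
    have hub : Filter.Tendsto (fun N : ℕ => f (ρ ^ N * ((1 - ρ) * T₁)) * F 0 ^ 2)
        Filter.atTop (nhds 0) := by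
      simpa using hf0.mul_const (F 0 ^ 2)
    apply squeeze_zero
      (fun N => mul_nonneg (hfpos _ (hsNpos N)).le (sq_nonneg _))
      (fun N => mul_le_mul_of_nonneg_left (hF0 N) (hfpos _ (hsNpos N)).le) hub
  have hfinal : f ((1 - ρ) * T₁) * F T₁ ^ 2 ≤ ∫ τ in (0:ℝ)..T₁, H τ := by
    have hlim := htend.add_const (∫ τ in (0:ℝ)..T₁, H τ)
    rw [zero_add] at hlim
    exact ge_of_tendsto' hlim hbound
  -- conclude
  have hγT₁ : γ₂ * ((1 - ρ) * T₁) = γ * T₁ := by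
    rw [hρdef]; field_simp; ring
  have hlb := hflb ((1 - ρ) * T₁) (mul_pos h1ρ hT₁)
  rw [hγT₁] at hlb
  have h2 : f₀ * Real.exp (-(2 / (γ * T₁) ^ β)) * F T₁ ^ 2 ≤ ∫ τ in (0:ℝ)..T₁, H τ :=
    le_trans (mul_le_mul_of_nonneg_right hlb (sq_nonneg _)) hfinal
  have hFT : 0 ≤ F T₁ := hFpos _ ⟨hT₁.le, hT₁T₀⟩
  have hprod : 0 < f₀ * Real.exp (-(2 / (γ * T₁) ^ β)) := by positivity
  have h3 : F T₁ ^ 2 ≤ f₀⁻¹ * Real.exp (2 / (γ * T₁) ^ β) * ∫ τ in (0:ℝ)..T₁, H τ := by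
    have h2' : F T₁ ^ 2 ≤ (∫ τ in (0:ℝ)..T₁, H τ) / (f₀ * Real.exp (-(2 / (γ * T₁) ^ β))) := by
      rw [le_div_iff₀ hprod]
      linarith [h2]
    have e3 : (∫ τ in (0:ℝ)..T₁, H τ) / (f₀ * Real.exp (-(2 / (γ * T₁) ^ β)))
        = f₀⁻¹ * Real.exp (2 / (γ * T₁) ^ β) * ∫ τ in (0:ℝ)..T₁, H τ := by
      rw [Real.exp_neg]
      field_simp
    rw [e3] at h2'
    exact h2'
  have hexp : Real.exp (2 / (γ * T₁) ^ β) = Real.exp (1 / (γ * T₁) ^ β) ^ 2 := by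
    rw [sq, ← Real.exp_add]
    congr 1
    ring
  calc F T₁ = Real.sqrt (F T₁ ^ 2) := (Real.sqrt_sq hFT).symm
    _ ≤ Real.sqrt (f₀⁻¹ * Real.exp (2 / (γ * T₁) ^ β) * ∫ τ in (0:ℝ)..T₁, H τ) :=
        Real.sqrt_le_sqrt h3
    _ = Real.sqrt f₀⁻¹ * Real.exp (1 / (γ * T₁) ^ β) * Real.sqrt (∫ τ in (0:ℝ)..T₁, H τ) := by
        rw [Real.sqrt_mul (by positivity), Real.sqrt_mul (by positivity), hexp,
          Real.sqrt_sq (Real.exp_nonneg _)]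
end

section
/- Let T > 0, let f ∈ L²((0,T); ℂ), and let c ∈ ℂ with c ≠ 0. Then the set {ξ ∈ ℝ : ∫_0^T e^{−iξs} f(s) ds = c} is finite. -/
open MeasureTheory Set

open Filter Topology Metric Real

theorem fourier_level_set_finite
    (T : ℝ) (hT : 0 < T) (f : ℝ → ℂ)
    (hf : MemLp f 2 (volume.restrict (Set.Ioo 0 T)))
    (c : ℂ) (hc : c ≠ 0) :
    Set.Finite {ξ : ℝ | ∫ s in (0:ℝ)..T, Complex.exp (-(Complex.I * ξ * s)) * f s = c} := by
  set μ := volume.restrict (Set.Ioo (0:ℝ) T) with hμ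
  haveI : IsFiniteMeasure μ := ⟨by
    rw [hμ, Measure.restrict_apply_univ]; exact measure_Ioo_lt_top⟩
  have hfi : Integrable f μ := hf.integrable (by norm_num)
  set G : ℂ → ℂ := fun z => ∫ s, Complex.exp (-(Complex.I * z * s)) * f s ∂μ with hG
  -- the level set equals a level set of G restricted to ℝ
  have hset : {ξ : ℝ | ∫ s in (0:ℝ)..T, Complex.exp (-(Complex.I * ξ * s)) * f s = c}
      = {ξ : ℝ | G ξ = c} := by
    ext ξ
    simp only [Set.mem_setOf_eq, hG]
    rw [intervalIntegral.integral_of_le hT.le, ← integral_Ioc_eq_integral_Ioo]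
  rw [hset]
  -- G is entire
  have hGdiff : Differentiable ℂ G := by
    intro z₀
    set B : ℝ := |z₀.im| + 1 with hB
    have hB0 : 0 < B := by positivity
    have hker_int : ∀ z : ℂ, Integrable (fun s : ℝ => Complex.exp (-(Complex.I * z * s)) * f s) μ := by
      intro z
      refine Integrable.mono' (hfi.norm.const_mul (Real.exp (T * |z.im|)))
        (((Complex.continuous_exp.comp (by fun_prop)).aestronglyMeasurable).mul
          hf.aestronglyMeasurable) ?_
      rw [hμ]
      filter_upwards [ae_restrict_mem measurableSet_Ioo] with s hs
      have hre : (-(Complex.I * z * s)).re = s * z.im := by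
        simp [Complex.mul_re, Complex.mul_im]; ring
      rw [norm_mul]
      have hnexp : ‖Complex.exp (-(Complex.I * z * s))‖ = Real.exp (s * z.im) := by
        rw [Complex.norm_exp, hre]
      rw [hnexp]
      have : s * z.im ≤ T * |z.im| := by
        calc s * z.im ≤ s * |z.im| := mul_le_mul_of_nonneg_left (le_abs_self _) hs.1.le
          _ ≤ T * |z.im| := mul_le_mul_of_nonneg_right hs.2.le (abs_nonneg _)
      exact mul_le_mul_of_nonneg_right (Real.exp_le_exp.mpr this) (norm_nonneg _)
    have key := hasDerivAt_integral_of_dominated_loc_of_deriv_le (μ := μ)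
      (F := fun (z : ℂ) (s : ℝ) => Complex.exp (-(Complex.I * z * s)) * f s)
      (F' := fun (z : ℂ) (s : ℝ) =>
        (Complex.exp (-(Complex.I * z * s)) * (-(Complex.I * s))) * f s)
      (x₀ := z₀) (bound := fun s => T * Real.exp (T * B) * ‖f s‖)
      (Metric.ball_mem_nhds z₀ one_pos)
      (Filter.Eventually.of_forall fun z =>
        ((Complex.continuous_exp.comp (by fun_prop)).aestronglyMeasurable).mul
          hf.aestronglyMeasurable)
      (hker_int z₀)
      (((Complex.continuous_exp.comp (by fun_prop)).mul (by fun_prop)).aestronglyMeasurable.mul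
        hf.aestronglyMeasurable)
      ?_ ((hfi.norm.const_mul _)) ?_
    · exact key.2.differentiableAt
    · -- bound
      rw [hμ]
      filter_upwards [ae_restrict_mem measurableSet_Ioo] with s hs z hz
      have hs0 : 0 < s := hs.1
      have hsT : s < T := hs.2
      have him : z.im ≤ B := by
        have : |z.im - z₀.im| ≤ ‖z - z₀‖ := by
          simpa using Complex.abs_im_le_norm (z - z₀)
        have h1 : ‖z - z₀‖ < 1 := by simpa [Metric.mem_ball, dist_eq_norm] using hz
        have := (abs_le.mp (this.trans h1.le)).2
        have h2 : z.im ≤ z₀.im + 1 := by linarith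
        have h3 : z₀.im ≤ |z₀.im| := le_abs_self _
        linarith [hB]
      have hre : (-(Complex.I * z * s)).re = s * z.im := by
        simp [Complex.mul_re, Complex.mul_im]
        ring
      rw [norm_mul, norm_mul]
      have hnexp : ‖Complex.exp (-(Complex.I * z * s))‖ = Real.exp (s * z.im) := by
        rw [Complex.norm_exp, hre]
      rw [hnexp]
      have hexp_le : Real.exp (s * z.im) ≤ Real.exp (T * B) := by
        apply Real.exp_le_exp.mpr
        calc s * z.im ≤ s * B := by
              rcases le_or_gt z.im B with h | h
              · exact mul_le_mul_of_nonneg_left h hs0.le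
              · linarith
          _ ≤ T * B := mul_le_mul_of_nonneg_right hsT.le hB0.le
      have hns : ‖-(Complex.I * (s:ℂ))‖ = |s| := by
        rw [norm_neg, norm_mul]; simp [Complex.norm_real]
      rw [hns]
      have h5 : Real.exp (s * z.im) * |s| ≤ Real.exp (T * B) * T := by
        apply mul_le_mul hexp_le (by rw [abs_of_pos hs0]; exact hsT.le) (abs_nonneg s)
          (Real.exp_pos _).le
      calc Real.exp (s * z.im) * |s| * ‖f s‖ ≤ Real.exp (T * B) * T * ‖f s‖ :=
            mul_le_mul_of_nonneg_right h5 (norm_nonneg _)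
        _ = T * Real.exp (T * B) * ‖f s‖ := by ring
    · -- derivative
      refine Filter.Eventually.of_forall fun s => fun z hz => ?_
      have h1 : HasDerivAt (fun z : ℂ => -(Complex.I * z * (s:ℂ))) (-(Complex.I * s)) z := by
        have heq : (fun z : ℂ => -(Complex.I * z * (s:ℂ)))
            = fun z : ℂ => (-(Complex.I * (s:ℂ))) * z := by
          funext z; ring
        rw [heq]
        simpa using (hasDerivAt_id z).const_mul (-(Complex.I * (s:ℂ)))
      exact (h1.cexp).mul_const (f s)
  -- Riemann-Lebesgue: G tends to 0 along the real cocompact filter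
  set F : ℝ → ℂ := (Set.Ioo (0:ℝ) T).indicator f with hF
  have hFi : Integrable F := by
    rw [hF, integrable_indicator_iff measurableSet_Ioo]
    exact hfi
  have RL := Real.tendsto_integral_exp_smul_cocompact F
  have hhom : Filter.Tendsto (fun ξ : ℝ => ξ * (2 * π)⁻¹) (cocompact ℝ) (cocompact ℝ) :=
    (Homeomorph.mulRight₀ ((2 * π)⁻¹)
      (inv_ne_zero (by positivity))).toCocompactMap.cocompact_tendsto'
  have hG0 : Filter.Tendsto (fun ξ : ℝ => G ξ) (cocompact ℝ) (𝓝 0) := by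
    refine (RL.comp hhom).congr fun ξ => ?_
    show ∫ v : ℝ, Real.fourierChar (-(v * (ξ * (2 * π)⁻¹))) • F v = G ξ
    have hker : ∀ v : ℝ, (Real.fourierChar (-(v * (ξ * (2 * π)⁻¹))) : ℂ)
        = Complex.exp (-(Complex.I * ξ * v)) := by
      intro v
      rw [Real.fourierChar_apply]
      congr 1
      have hπ : (2 * π) ≠ 0 := by positivity
      have hπ' : (π : ℂ) ≠ 0 := by exact_mod_cast Real.pi_ne_zero
      push_cast
      field_simp
    calc ∫ v : ℝ, Real.fourierChar (-(v * (ξ * (2 * π)⁻¹))) • F v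
        = ∫ v : ℝ, (Set.Ioo (0:ℝ) T).indicator
            (fun v => Complex.exp (-(Complex.I * ξ * v)) * f v) v := by
          congr 1; funext v
          rw [Circle.smul_def, hker]
          by_cases hv : v ∈ Set.Ioo (0:ℝ) T
          · rw [hF, Set.indicator_of_mem hv, Set.indicator_of_mem hv, smul_eq_mul]
          · rw [hF, Set.indicator_of_notMem hv, Set.indicator_of_notMem hv, smul_zero]
      _ = G ξ := by rw [integral_indicator measurableSet_Ioo]
  -- now conclude by contradiction
  by_contra hfin
  have hinf : {ξ : ℝ | G ξ = c}.Infinite := hfin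
  -- the set is contained in a compact set
  have hev : ∀ᶠ ξ : ℝ in cocompact ℝ, G ξ ∈ Metric.ball (0:ℂ) ‖c‖ :=
    hG0.eventually_mem (Metric.ball_mem_nhds 0 (norm_pos_iff.mpr hc))
  obtain ⟨K, hK, hKsub⟩ := Filter.mem_cocompact.mp hev
  have hsub : {ξ : ℝ | G ξ = c} ⊆ K := by
    intro ξ hξ
    by_contra hξK
    have := hKsub hξK
    simp only [Set.mem_setOf_eq] at hξ
    rw [Set.mem_setOf_eq] at this
    rw [hξ] at this
    simp [Metric.mem_ball, dist_zero_right] at this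
  obtain ⟨x₀, -, hacc⟩ := hinf.exists_accPt_of_subset_isCompact hK hsub
  have hfreq : ∃ᶠ y in 𝓝[≠] x₀, y ∈ {ξ : ℝ | G ξ = c} := by
    rw [frequently_nhdsWithin_iff]
    have := (accPt_iff_frequently (x := x₀)).mp hacc
    exact this.mono fun y hy => ⟨hy.2, hy.1⟩
  have hmap : Filter.Tendsto (fun x : ℝ => (x : ℂ)) (𝓝[≠] x₀) (𝓝[≠] ((x₀ : ℝ) : ℂ)) := by
    refine (Complex.continuous_ofReal.continuousWithinAt).tendsto_nhdsWithin ?_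
    intro y hy
    simp only [Set.mem_compl_iff, Set.mem_singleton_iff] at hy ⊢
    exact fun h => hy (Complex.ofReal_injective h)
  have hfreq' : ∃ᶠ z in 𝓝[≠] ((x₀ : ℝ) : ℂ), G z = c :=
    hmap.frequently (hfreq.mono fun y hy => hy)
  have hGan : AnalyticOnNhd ℂ G Set.univ :=
    (hGdiff.differentiableOn).analyticOnNhd isOpen_univ
  have heq : Set.EqOn G (fun _ => c) Set.univ :=
    hGan.eqOn_of_preconnected_of_frequently_eq analyticOnNhd_const
      isPreconnected_univ (Set.mem_univ _) hfreq'
  have : Filter.Tendsto (fun _ : ℝ => c) (cocompact ℝ) (𝓝 0) :=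
    hG0.congr fun ξ => heq (Set.mem_univ _)
  exact hc (tendsto_const_nhds_iff.mp this)
end

section
/- Let c > 0, r ∈ (1/2, 2], and T > 0. Then there exist c′ > 0 and θ > 0 such that for all λ ≥ 0 and all t₁, t₂ with 0 ≤ t₁ < t₂ ≤ T one has exp(−c (λ t₂)^r) ≤ exp(−c′ λ^r (t₂ − t₁)^θ) · exp(−c (λ t₁)^r). In other words, the function φ(s) = exp(−c |s|^r) satisfies the decay hypothesis (H) with parameters c′, r, θ, T. -/
open MeasureTheory Real Set

/-- The characteristic function of a measure on ℝ. -/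
noncomputable def charFun' (μ : Measure ℝ) (s : ℝ) : ℂ :=
  ∫ ξ, Complex.exp (Complex.I * s * ξ) ∂μ

/-- The decay hypothesis (H) with parameters `c, r, θ, T₀`. -/
def HypH (φ : ℝ → ℂ) (c r θ T₀ : ℝ) : Prop :=
  0 < c ∧ 1 / 2 < r ∧ 0 < θ ∧ 0 < T₀ ∧
  ∀ l : ℝ, 0 ≤ l → ∀ t₁ t₂ : ℝ, 0 ≤ t₁ → t₁ < t₂ → t₂ ≤ T₀ →
    ‖φ (l * t₂)‖ ≤
      Real.exp (-(c * l ^ r * (t₂ - t₁) ^ θ)) * ‖φ (l * t₁)‖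

lemma real_add_rpow_le_rpow_add {a b p : ℝ} (ha : 0 ≤ a) (hb : 0 ≤ b) (hp : 1 ≤ p) :
    a ^ p + b ^ p ≤ (a + b) ^ p := by
  lift a to NNReal using ha
  lift b to NNReal using hb
  rw [← NNReal.coe_add, ← NNReal.coe_rpow, ← NNReal.coe_rpow, ← NNReal.coe_rpow,
    ← NNReal.coe_add, NNReal.coe_le_coe]
  exact NNReal.add_rpow_le_rpow_add a b hp

theorem stable_distribution_satisfies_hypH
    (c r T : ℝ) (hc : 0 < c) (hr₁ : 1 / 2 < r) (hr₂ : r ≤ 2) (hT : 0 < T) :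
    ∃ c' > 0, ∃ θ > 0, ∀ l : ℝ, 0 ≤ l → ∀ t₁ t₂ : ℝ, 0 ≤ t₁ → t₁ < t₂ → t₂ ≤ T →
      Real.exp (-(c * (l * t₂) ^ r)) ≤
        Real.exp (-(c' * l ^ r * (t₂ - t₁) ^ θ)) * Real.exp (-(c * (l * t₁) ^ r)) := by
  refine ⟨c * (r / 2) * T ^ (r - 2 : ℝ), by positivity, 2, by norm_num, ?_⟩
  intro l hl t₁ t₂ ht₁ hlt ht₂
  have hr0 : 0 < r := lt_trans (by norm_num) hr₁
  have hd : 0 < t₂ - t₁ := sub_pos.mpr hlt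
  have ht₂0 : 0 < t₂ := lt_of_le_of_lt ht₁ hlt
  have hdT : t₂ - t₁ ≤ T := by linarith
  -- key inequality: (r/2) * T^(r-2) * (t₂-t₁)^2 ≤ t₂^r - t₁^r
  have key : (r / 2) * T ^ (r - 2 : ℝ) * (t₂ - t₁) ^ (2 : ℝ) + t₁ ^ r ≤ t₂ ^ r := by
    obtain ⟨d, hd_def⟩ : ∃ d, d = t₂ - t₁ := ⟨_, rfl⟩
    rw [← hd_def]
    replace hd : 0 < d := by rw [hd_def]; exact hd
    replace hdT : d ≤ T := by rw [hd_def]; exact hdT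
    have hTpow : (0:ℝ) < T ^ (r - 2 : ℝ) := Real.rpow_pos_of_pos hT _
    rcases le_or_gt 1 r with h1 | h1
    · -- superadditivity case
      have hsuper : t₁ ^ r + d ^ r ≤ t₂ ^ r := by
        have := real_add_rpow_le_rpow_add (a := t₁) (b := d) ht₁ hd.le h1
        simpa [hd_def] using this
      have hsplit : d ^ (2 : ℝ) = d ^ r * d ^ (2 - r : ℝ) := by
        rw [← Real.rpow_add hd]; ring_nf
      have hmono : d ^ (2 - r : ℝ) ≤ T ^ (2 - r : ℝ) :=
        Real.rpow_le_rpow hd.le hdT (by linarith)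
      have hTT : T ^ (r - 2 : ℝ) * T ^ (2 - r : ℝ) = 1 := by
        rw [← Real.rpow_add hT]; norm_num
      have hdr : (0:ℝ) < d ^ r := Real.rpow_pos_of_pos hd _
      have hcalc : T ^ (r - 2 : ℝ) * d ^ (2 : ℝ) ≤ d ^ r := by
        calc T ^ (r - 2 : ℝ) * d ^ (2 : ℝ)
            = (d ^ r * T ^ (r - 2 : ℝ)) * d ^ (2 - r : ℝ) := by rw [hsplit]; ring
          _ ≤ (d ^ r * T ^ (r - 2 : ℝ)) * T ^ (2 - r : ℝ) := by
              exact mul_le_mul_of_nonneg_left hmono (by positivity)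
          _ = d ^ r * (T ^ (r - 2 : ℝ) * T ^ (2 - r : ℝ)) := by ring
          _ = d ^ r := by rw [hTT, mul_one]
      have hd2 : (0:ℝ) ≤ d ^ (2 : ℝ) := Real.rpow_nonneg hd.le _
      nlinarith [mul_nonneg hTpow.le hd2]
    · -- Bernoulli case, r < 1
      have hrm1 : t₂ ^ (r - 1 : ℝ) = t₂ ^ r / t₂ := by
        rw [Real.rpow_sub ht₂0, Real.rpow_one]
      have hber : t₁ ^ r ≤ t₂ ^ r - r * t₂ ^ (r - 1 : ℝ) * d := by
        have hs : (-1:ℝ) ≤ t₁ / t₂ - 1 := by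
          have : 0 ≤ t₁ / t₂ := div_nonneg ht₁ ht₂0.le
          linarith
        have hB := rpow_one_add_le_one_add_mul_self hs hr0.le h1.le
        rw [show (1 : ℝ) + (t₁ / t₂ - 1) = t₁ / t₂ by ring] at hB
        have ht₁eq : t₁ ^ r = t₂ ^ r * (t₁ / t₂) ^ r := by
          rw [← Real.mul_rpow ht₂0.le (div_nonneg ht₁ ht₂0.le), mul_div_cancel₀ _ ht₂0.ne']
        have hpow : t₂ ^ r * (t₁ / t₂) ^ r ≤ t₂ ^ r * (1 + r * (t₁ / t₂ - 1)) :=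
          mul_le_mul_of_nonneg_left hB (Real.rpow_pos_of_pos ht₂0 _).le
        have hrhs : t₂ ^ r * (1 + r * (t₁ / t₂ - 1)) = t₂ ^ r - r * t₂ ^ (r - 1 : ℝ) * d := by
          rw [hrm1, hd_def]
          field_simp
          ring
        rw [ht₁eq]
        rw [hrhs] at hpow
        exact hpow
      -- now need (r/2) T^(r-2) d^2 ≤ r t₂^(r-1) d
      have hstep : (r / 2) * T ^ (r - 2 : ℝ) * d ^ (2 : ℝ) ≤ r * t₂ ^ (r - 1 : ℝ) * d := by
        have hd2 : d ^ (2 : ℝ) = d * d := by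
          rw [show (2:ℝ) = (1:ℝ) + 1 by norm_num, Real.rpow_add hd, Real.rpow_one]
        have hTd : T ^ (r - 2 : ℝ) * d ≤ T ^ (r - 1 : ℝ) := by
          have : T ^ (r - 1 : ℝ) = T ^ (r - 2 : ℝ) * T := by
            rw [show r - 1 = (r - 2) + 1 by ring, Real.rpow_add_one hT.ne']
          rw [this]
          exact mul_le_mul_of_nonneg_left hdT hTpow.le
        have hanti : T ^ (r - 1 : ℝ) ≤ t₂ ^ (r - 1 : ℝ) :=
          Real.rpow_le_rpow_of_nonpos ht₂0 (by linarith : t₂ ≤ T) (by linarith)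
        have h1' : T ^ (r - 2 : ℝ) * d ≤ t₂ ^ (r - 1 : ℝ) := le_trans hTd hanti
        have h2' := mul_le_mul_of_nonneg_left h1' (by positivity : (0:ℝ) ≤ r * d)
        calc (r / 2) * T ^ (r - 2 : ℝ) * d ^ (2 : ℝ)
            ≤ r * T ^ (r - 2 : ℝ) * d ^ (2 : ℝ) := by
              nlinarith [mul_nonneg (mul_nonneg hr0.le hTpow.le)
                (Real.rpow_nonneg hd.le (2:ℝ))]
          _ = (r * d) * (T ^ (r - 2 : ℝ) * d) := by rw [hd2]; ring
          _ ≤ (r * d) * t₂ ^ (r - 1 : ℝ) := h2'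
          _ = r * t₂ ^ (r - 1 : ℝ) * d := by ring
      linarith
  -- conclude
  rw [← Real.exp_add, Real.exp_le_exp]
  rw [Real.mul_rpow hl (le_of_lt ht₂0), Real.mul_rpow hl ht₁]
  have hlr : (0:ℝ) ≤ l ^ r := Real.rpow_nonneg hl _
  rw [← Real.rpow_two]
  nlinarith [mul_le_mul_of_nonneg_left key (mul_nonneg hc.le hlr)]
end
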